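/- A vector p* ∈ ℝ^n satisfying ‖P_par^T p*‖₂ ≤ δ and ‖P_perp^T p*‖₂ ≤ δ is a global solution of the trust-region subproblem: minimize Q(p) = g^T p + (1/2) p^T B p subject to ‖p‖_{P,2} ≤ δ, if and only if there exist unique σ_par ≥ 0 and σ_perp ≥ 0 such that (B + C_par) p* + g = 0, σ_par (‖P_par^T p*‖₂ − δ) = 0, σ_perp (‖P_perp^T p*‖₂ − δ) = 0, and the matrix B + C_par is positive semidefinite, where C_par = σ_perp I_n + (σ_par − σ_perp) P_par P_par^T. -/

import Mathlib

open Matrix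

/-- The Euclidean (two-)norm of a vector in `ℝ^m`. -/
noncomputable def norm2 {m : ℕ} (x : Fin m → ℝ) : ℝ := Real.sqrt (∑ i, x i ^ 2)

lemma norm2_eq_sqrt_dot {m : ℕ} (x : Fin m → ℝ) : norm2 x = Real.sqrt (x ⬝ᵥ x) := by
  unfold norm2 dotProduct
  congr 1
  exact Finset.sum_congr rfl (fun i _ => sq (x i) ▸ (sq (x i)).symm ▸ (pow_two (x i)))

lemma dot_self_nonneg {m : ℕ} (x : Fin m → ℝ) : 0 ≤ x ⬝ᵥ x :=
  Finset.sum_nonneg fun i _ => mul_self_nonneg (x i)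

lemma norm2_le_iff {m : ℕ} (x : Fin m → ℝ) {δ : ℝ} (hδ : 0 ≤ δ) :
    norm2 x ≤ δ ↔ x ⬝ᵥ x ≤ δ^2 := by
  rw [norm2_eq_sqrt_dot]
  constructor
  · intro h
    have := Real.sq_sqrt (dot_self_nonneg x)
    nlinarith [Real.sqrt_nonneg (x ⬝ᵥ x)]
  · intro h
    calc Real.sqrt (x ⬝ᵥ x) ≤ Real.sqrt (δ^2) := Real.sqrt_le_sqrt h
    _ = δ := Real.sqrt_sq hδ

lemma norm2_eq_iff {m : ℕ} (x : Fin m → ℝ) {δ : ℝ} (hδ : 0 ≤ δ) :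
    norm2 x = δ ↔ x ⬝ᵥ x = δ^2 := by
  rw [norm2_eq_sqrt_dot]
  constructor
  · intro h
    rw [← h, Real.sq_sqrt (dot_self_nonneg x)]
  · intro h
    rw [h, Real.sqrt_sq hδ]

lemma tm_dot_symm {m : ℕ} (M : Matrix (Fin m) (Fin m) ℝ) (hM : Mᵀ = M)
    (x y : Fin m → ℝ) : x ⬝ᵥ M *ᵥ y = y ⬝ᵥ M *ᵥ x := by
  rw [dotProduct_mulVec, ← mulVec_transpose, hM, dotProduct_comm]

lemma tm_mulVec_dot {m l : ℕ} (M : Matrix (Fin m) (Fin l) ℝ)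
    (x : Fin l → ℝ) (z : Fin m → ℝ) : (M *ᵥ x) ⬝ᵥ z = x ⬝ᵥ (Mᵀ *ᵥ z) := by
  rw [dotProduct_comm, dotProduct_mulVec, ← mulVec_transpose, dotProduct_comm]

lemma tm_expand_quad {m : ℕ} (M : Matrix (Fin m) (Fin m) ℝ) (hM : Mᵀ = M)
    (a v h : Fin m → ℝ) :
    a ⬝ᵥ (v + h) + (1/2) * ((v + h) ⬝ᵥ M *ᵥ (v + h))
      = (a ⬝ᵥ v + (1/2) * (v ⬝ᵥ M *ᵥ v))
        + ((a + M *ᵥ v) ⬝ᵥ h + (1/2) * (h ⬝ᵥ M *ᵥ h)) := by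
  have h1 : v ⬝ᵥ M *ᵥ h = h ⬝ᵥ M *ᵥ v := tm_dot_symm M hM v h
  have h2 : (M *ᵥ v) ⬝ᵥ h = h ⬝ᵥ M *ᵥ v := by rw [dotProduct_comm]
  simp only [mulVec_add, dotProduct_add, add_dotProduct]
  linarith

lemma tm_bilin {m : ℕ} (M : Matrix (Fin m) (Fin m) ℝ) (hM : Mᵀ = M) (t s : ℝ)
    (u w : Fin m → ℝ) :
    (t•u + s•w) ⬝ᵥ M *ᵥ (t•u + s•w)
      = t^2*(u ⬝ᵥ M *ᵥ u) + 2*t*s*(u ⬝ᵥ M *ᵥ w) + s^2*(w ⬝ᵥ M *ᵥ w) := by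
  have h1 : w ⬝ᵥ M *ᵥ u = u ⬝ᵥ M *ᵥ w := tm_dot_symm M hM w u
  simp only [mulVec_add, mulVec_smul, dotProduct_add, add_dotProduct,
    dotProduct_smul, smul_dotProduct, smul_eq_mul, h1]
  ring

lemma tm_dot_lin {m : ℕ} (x : Fin m → ℝ) (t s : ℝ) (u w : Fin m → ℝ) :
    x ⬝ᵥ (t•u + s•w) = t*(x ⬝ᵥ u) + s*(x ⬝ᵥ w) := by
  simp only [dotProduct_add, dotProduct_smul, smul_eq_mul]

lemma tm_dot_expand {m : ℕ} (t s : ℝ) (u w : Fin m → ℝ) :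
    (t•u + s•w) ⬝ᵥ (t•u + s•w) = t^2*(u⬝ᵥu) + 2*t*s*(u⬝ᵥw) + s^2*(w⬝ᵥw) := by
  have := tm_bilin (1 : Matrix (Fin m) (Fin m) ℝ) transpose_one t s u w
  simpa using this

lemma tm_sigma_unique {m : ℕ} (M : Matrix (Fin m) (Fin m) ℝ) (a v : Fin m → ℝ)
    (δ σ σ' : ℝ) (hδ : 0 < δ)
    (h : (M + σ•1) *ᵥ v + a = 0) (h' : (M + σ'•1) *ᵥ v + a = 0)
    (hc : σ * (v ⬝ᵥ v - δ^2) = 0) (hc' : σ' * (v ⬝ᵥ v - δ^2) = 0) : σ = σ' := by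
  have hsv : σ • v = σ' • v := by
    have := h.trans h'.symm
    simp only [add_mulVec, smul_mulVec, one_mulVec] at this
    have h2 : M *ᵥ v + σ • v + a - (M *ᵥ v + σ' • v + a) = 0 := by rw [this]; ring
    have h3 : σ • v - σ' • v = 0 := by
      rw [← h2]; abel
    exact sub_eq_zero.mp h3
  by_cases hv : v = 0
  · have hvv : v ⬝ᵥ v = 0 := by simp [hv]
    rw [hvv] at hc hc'
    have hσ : σ = 0 := by
      rcases mul_eq_zero.mp hc with h | h
      · exact h
      · nlinarith
    have hσ' : σ' = 0 := by
      rcases mul_eq_zero.mp hc' with h | h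
      · exact h
      · nlinarith
    rw [hσ, hσ']
  · obtain ⟨i, hi⟩ : ∃ i, v i ≠ 0 := by
      by_contra hall
      push_neg at hall
      exact hv (funext hall)
    have := congrFun hsv i
    simp only [Pi.smul_apply, smul_eq_mul] at this
    exact mul_right_cancel₀ hi this

/-- If `a + b t + c t² ≥ 0` for all small positive `t`, then `a ≥ 0`. -/
lemma tm_key (a b c ε : ℝ) (hε : 0 < ε)
    (h : ∀ t : ℝ, 0 < t → t < ε → 0 ≤ a + b*t + c*t^2) : 0 ≤ a := by
  by_contra hneg
  push_neg at hneg
  set K := |b| + |c| + 1 with hK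
  have hK0 : (0:ℝ) < K := by positivity
  set t := min (ε/2) (min 1 (-a / (2*K))) with ht
  have ht0 : 0 < t :=
    lt_min (by linarith) (lt_min one_pos (div_pos (by linarith) (by linarith)))
  have htε : t < ε := lt_of_le_of_lt (min_le_left _ _) (by linarith)
  have ht1 : t ≤ 1 := le_trans (min_le_right _ _) (min_le_left _ _)
  have hta : t ≤ -a/(2*K) := le_trans (min_le_right _ _) (min_le_right _ _)
  have h2 := h t ht0 htε
  have hb : b*t ≤ |b| * t := mul_le_mul_of_nonneg_right (le_abs_self b) ht0.le
  have hc : c*t^2 ≤ |c| * t := by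
    nlinarith [mul_le_mul_of_nonneg_right (le_abs_self c) (sq_nonneg t),
      mul_le_mul_of_nonneg_left ht1 (mul_nonneg (abs_nonneg c) ht0.le)]
  have hKt : K*t ≤ -a/2 := by
    have h3 := mul_le_mul_of_nonneg_left hta hK0.le
    calc K*t ≤ K * (-a/(2*K)) := h3
    _ = -a/2 := by field_simp
  nlinarith [abs_nonneg b, abs_nonneg c]

lemma tm_key_lin (a b ε : ℝ) (hε : 0 < ε)
    (h : ∀ t : ℝ, 0 < t → t < ε → 0 ≤ a*t + b*t^2) : 0 ≤ a := by
  apply tm_key a b 0 ε hε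
  intro t ht0 htε
  have h2 := h t ht0 htε
  by_contra hlt
  push_neg at hlt
  have h3 : (a + b*t + 0*t^2) * t < 0 := mul_neg_of_neg_of_pos hlt ht0
  nlinarith

lemma tm_key_quart (a b c d ε : ℝ) (hε : 0 < ε)
    (h : ∀ t : ℝ, 0 < t → t < ε → 0 ≤ a*t + b*t^2 + c*t^3 + d*t^4) : 0 ≤ a := by
  apply tm_key_lin a (|b| + |c| + |d|) (min ε 1) (lt_min hε one_pos)
  intro t ht0 htε
  have ht1 : t ≤ 1 := le_of_lt (lt_of_lt_of_le htε (min_le_right _ _))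
  have h2 := h t ht0 (lt_of_lt_of_le htε (min_le_left _ _))
  have e1 : b*t^2 ≤ |b| * t^2 := mul_le_mul_of_nonneg_right (le_abs_self b) (sq_nonneg t)
  have e2 : c*t^3 ≤ |c| * t^3 := mul_le_mul_of_nonneg_right (le_abs_self c) (by positivity)
  have e3 : d*t^4 ≤ |d| * t^4 := mul_le_mul_of_nonneg_right (le_abs_self d) (by positivity)
  have ht2 : t^2 ≤ 1 := by nlinarith
  have e4 : |c| * t^3 ≤ |c| * t^2 := by
    nlinarith [mul_le_mul_of_nonneg_left ht1 (mul_nonneg (abs_nonneg c) (sq_nonneg t))]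
  have e5 : |d| * t^4 ≤ |d| * t^2 := by
    nlinarith [mul_le_mul_of_nonneg_left ht2 (mul_nonneg (abs_nonneg d) (sq_nonneg t))]
  nlinarith

lemma tm_bilin1 {m : ℕ} (M : Matrix (Fin m) (Fin m) ℝ) (t : ℝ) (u : Fin m → ℝ) :
    (t•u) ⬝ᵥ M *ᵥ (t•u) = t^2*(u ⬝ᵥ M *ᵥ u) := by
  simp only [mulVec_smul, dotProduct_smul, smul_dotProduct, smul_eq_mul]
  ring

lemma tm_dot_expand1 {m : ℕ} (t : ℝ) (v d : Fin m → ℝ) :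
    (v + t•d) ⬝ᵥ (v + t•d) = v⬝ᵥv + 2*t*(v⬝ᵥd) + t^2*(d⬝ᵥd) := by
  have hc : d ⬝ᵥ v = v ⬝ᵥ d := dotProduct_comm d v
  simp only [dotProduct_add, add_dotProduct, dotProduct_smul, smul_dotProduct,
    smul_eq_mul, hc]
  ring

set_option maxHeartbeats 1000000 in
lemma tm_trs {m : ℕ} (A : Matrix (Fin m) (Fin m) ℝ) (hA : Aᵀ = A)
    (a : Fin m → ℝ) (δ : ℝ) (hδ : 0 < δ) (v : Fin m → ℝ) (hv : v ⬝ᵥ v ≤ δ^2) :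
    (∀ w : Fin m → ℝ, w ⬝ᵥ w ≤ δ^2 →
        a ⬝ᵥ v + (1/2) * (v ⬝ᵥ A *ᵥ v) ≤ a ⬝ᵥ w + (1/2) * (w ⬝ᵥ A *ᵥ w))
    ↔ ∃ σ : ℝ, 0 ≤ σ ∧ (A + σ • 1) *ᵥ v + a = 0 ∧ σ * (v ⬝ᵥ v - δ^2) = 0 ∧
        ∀ d : Fin m → ℝ, 0 ≤ d ⬝ᵥ (A + σ • 1) *ᵥ d := by
  have quadid : ∀ (σ : ℝ) (d : Fin m → ℝ),
      d ⬝ᵥ (A + σ•1) *ᵥ d = d ⬝ᵥ A *ᵥ d + σ * (d ⬝ᵥ d) := by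
    intro σ d
    simp only [add_mulVec, smul_mulVec, one_mulVec, dotProduct_add,
      dotProduct_smul, smul_eq_mul]
  have statid : ∀ σ : ℝ, (A + σ•1) *ᵥ v + a = (a + A *ᵥ v) + σ • v := by
    intro σ
    simp only [add_mulVec, smul_mulVec, one_mulVec]
    abel
  constructor
  · -- necessity
    intro hglob
    have Ediff : ∀ h : Fin m → ℝ, (v + h) ⬝ᵥ (v + h) ≤ δ^2 →
        0 ≤ (a + A *ᵥ v) ⬝ᵥ h + (1/2) * (h ⬝ᵥ A *ᵥ h) := by
      intro h hfeas
      have h1 := hglob (v + h) hfeas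
      have h2 := tm_expand_quad A hA a v h
      linarith
    set grad := a + A *ᵥ v with hgraddef
    by_cases hb : v ⬝ᵥ v = δ^2
    · -- boundary case
      have hδ2 : (0:ℝ) < δ^2 := by positivity
      have hgv : grad ⬝ᵥ v ≤ 0 := by
        have h0 : 0 ≤ -(grad ⬝ᵥ v) := by
          apply tm_key_lin _ ((1/2) * (v ⬝ᵥ A *ᵥ v)) 1 one_pos
          intro t ht0 ht1
          have hfeas : (v + (-t)•v) ⬝ᵥ (v + (-t)•v) ≤ δ^2 := by
            rw [tm_dot_expand1]
            nlinarith [hb, mul_nonneg (by nlinarith : (0:ℝ) ≤ 2*t - t^2) hδ2.le]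
          have hE := Ediff ((-t)•v) hfeas
          rw [tm_bilin1, dotProduct_smul, smul_eq_mul] at hE
          nlinarith
        linarith
      set σ := -(grad ⬝ᵥ v)/δ^2 with hσdef
      have hσ : 0 ≤ σ := div_nonneg (by linarith) (le_of_lt hδ2)
      have hσv : σ * δ^2 = -(grad ⬝ᵥ v) := by
        rw [hσdef]
        field_simp
      clear_value σ
      have hperp : ∀ u : Fin m → ℝ, u ⬝ᵥ v = 0 → u ⬝ᵥ u ≤ 1 → 0 ≤ grad ⬝ᵥ u := by
        intro u huv huu
        apply tm_key_quart _ (-(grad ⬝ᵥ v)/δ^2 + (1/2)*(u ⬝ᵥ A *ᵥ u))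
              (-(u ⬝ᵥ A *ᵥ v)/δ^2) ((1/2)*(v ⬝ᵥ A *ᵥ v)/δ^4) (min δ 1)
              (lt_min hδ one_pos)
        intro t ht0 htε
        have htδ : t < δ := lt_of_lt_of_le htε (min_le_left _ _)
        set c : ℝ := -(t^2/δ^2) with hc
        have hvh : v + (t•u + c•v) = t•u + (1+c)•v := by
          funext i
          simp only [Pi.add_apply, Pi.smul_apply, smul_eq_mul]
          ring
        have hfeas : (v + (t•u + c•v)) ⬝ᵥ (v + (t•u + c•v)) ≤ δ^2 := by
          rw [hvh, tm_dot_expand, huv, hb, hc]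
          have e1 : t^2 ≤ δ^2 := by nlinarith
          have e3 : t^2*t^2 ≤ t^2*δ^2 := mul_le_mul_of_nonneg_left e1 (sq_nonneg t)
          have e4 : t^2*t^2/δ^2 ≤ t^2 := by
            rw [div_le_iff₀ hδ2]
            nlinarith [e3]
          have e5 : t^2*(u ⬝ᵥ u) ≤ t^2 := by
            nlinarith [mul_nonneg (sq_nonneg t) (by linarith : (0:ℝ) ≤ 1 - u ⬝ᵥ u)]
          have key : (1 + -(t^2/δ^2))^2*δ^2 = δ^2 - 2*t^2 + t^2*t^2/δ^2 := by
            field_simp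
            ring
          nlinarith [key, e4, e5]
        have hE := Ediff (t•u + c•v) hfeas
        rw [tm_bilin A hA, tm_dot_lin] at hE
        rw [hc] at hE
        have hne : δ^2 ≠ 0 := ne_of_gt hδ2
        have heq : (grad ⬝ᵥ u)*t + (-(grad ⬝ᵥ v)/δ^2 + (1/2)*(u ⬝ᵥ A *ᵥ u))*t^2
             + (-(u ⬝ᵥ A *ᵥ v)/δ^2)*t^3 + ((1/2)*(v ⬝ᵥ A *ᵥ v)/δ^4)*t^4
             = t*(grad ⬝ᵥ u) + (-(t^2/δ^2))*(grad ⬝ᵥ v)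
               + (1/2)*(t^2*(u ⬝ᵥ A *ᵥ u) + 2*t*(-(t^2/δ^2))*(u ⬝ᵥ A *ᵥ v)
                 + (-(t^2/δ^2))^2*(v ⬝ᵥ A *ᵥ v)) := by
          field_simp
          ring
        rw [heq]
        linarith [hE]
      have hgradu : ∀ u : Fin m → ℝ, u ⬝ᵥ v = 0 → grad ⬝ᵥ u = 0 := by
        intro u huv
        have huu := dot_self_nonneg u
        have hpos : (0:ℝ) < u ⬝ᵥ u + 1 := by linarith
        set c0 : ℝ := 1/(u ⬝ᵥ u + 1) with hc0
        have hc0pos : 0 < c0 := by positivity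
        have h1 : (c0•u) ⬝ᵥ v = 0 := by
          rw [smul_dotProduct, huv, smul_eq_mul, mul_zero]
        have h2 : (c0•u) ⬝ᵥ (c0•u) ≤ 1 := by
          rw [smul_dotProduct, dotProduct_smul, smul_eq_mul, smul_eq_mul]
          have hcs : c0 * (u ⬝ᵥ u + 1) = 1 := by
            rw [hc0]; field_simp
          have h2b : c0 * (c0 * (u ⬝ᵥ u + 1)) = c0 := by rw [hcs, mul_one]
          nlinarith [h2b, sq_nonneg (c0 - 1), sq_nonneg c0]
        have ha := hperp (c0•u) h1 h2
        have hbb := hperp (-(c0•u))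
          (by rw [neg_dotProduct, h1, neg_zero])
          (by rw [neg_dotProduct, dotProduct_neg, neg_neg]; exact h2)
        rw [dotProduct_neg] at hbb
        have h3 : grad ⬝ᵥ (c0•u) = 0 := le_antisymm (by linarith) ha
        rw [dotProduct_smul, smul_eq_mul] at h3
        rcases mul_eq_zero.mp h3 with h | h
        · exact absurd h (ne_of_gt hc0pos)
        · exact h
      have hrv : (grad + σ • v) ⬝ᵥ v = 0 := by
        rw [add_dotProduct, smul_dotProduct, smul_eq_mul, hb]
        linarith [hσv]
      have hr : grad + σ • v = 0 := by
        have hvr : v ⬝ᵥ (grad + σ • v) = 0 := by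
          rw [dotProduct_comm]; exact hrv
        have hru : grad ⬝ᵥ (grad + σ • v) = 0 := hgradu _ hrv
        have hrr : (grad + σ • v) ⬝ᵥ (grad + σ • v) = 0 := by
          rw [add_dotProduct, hru, smul_dotProduct, smul_eq_mul, hvr, mul_zero,
            add_zero]
        exact dotProduct_self_eq_zero.mp hrr
      have hgr : grad = -(σ•v) := eq_neg_of_add_eq_zero_left hr
      have hMsymm : (A + σ•1)ᵀ = A + σ•1 := by
        rw [transpose_add, transpose_smul, transpose_one, hA]
      refine ⟨σ, hσ, ?_, ?_, ?_⟩
      · rw [statid]; exact hr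
      · rw [hb, sub_self, mul_zero]
      · have main : ∀ d : Fin m → ℝ, v ⬝ᵥ d ≠ 0 → 0 ≤ d ⬝ᵥ (A + σ•1) *ᵥ d := by
          intro d hvd
          have hd0 : d ≠ 0 := fun h => hvd (by rw [h, dotProduct_zero])
          have hdd : 0 < d ⬝ᵥ d :=
            lt_of_le_of_ne (dot_self_nonneg d)
              (fun h => hd0 (dotProduct_self_eq_zero.mp h.symm))
          have hddne : d ⬝ᵥ d ≠ 0 := ne_of_gt hdd
          set t0 : ℝ := -2*(v ⬝ᵥ d)/(d ⬝ᵥ d) with ht0def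
          have e2 : t0 * (d ⬝ᵥ d) = -2*(v ⬝ᵥ d) := by
            rw [ht0def]
            field_simp
          clear_value t0
          have hfeas : (v + t0•d) ⬝ᵥ (v + t0•d) ≤ δ^2 := by
            rw [tm_dot_expand1, hb]
            have hz : 2*t0*(v ⬝ᵥ d) + t0^2*(d ⬝ᵥ d) = 0 := by
              have : t0 * (t0 * (d ⬝ᵥ d)) = t0 * (-2*(v ⬝ᵥ d)) := by rw [e2]
              nlinarith [this]
            linarith
          have hE := Ediff (t0•d) hfeas
          rw [tm_bilin1, dotProduct_smul, smul_eq_mul] at hE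
          have hgd : grad ⬝ᵥ d = -(σ * (v ⬝ᵥ d)) := by
            rw [hgr, neg_dotProduct, smul_dotProduct, smul_eq_mul]
          rw [hgd] at hE
          rw [quadid]
          have hE2 : 0 ≤ (t0 * -(σ * (v ⬝ᵥ d)) + 1/2*(t0^2 * (d ⬝ᵥ A *ᵥ d)))
              * (d ⬝ᵥ d)^2 := mul_nonneg hE (by positivity)
          have e3 : (t0 * -(σ * (v ⬝ᵥ d)) + 1/2*(t0^2 * (d ⬝ᵥ A *ᵥ d)))
                * (d ⬝ᵥ d)^2
              = 2*σ*(v ⬝ᵥ d)^2*(d ⬝ᵥ d) + 2*(v ⬝ᵥ d)^2*(d ⬝ᵥ A *ᵥ d) := by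
            linear_combination (-σ*(v ⬝ᵥ d)*(d ⬝ᵥ d)
              + (1/2)*(d ⬝ᵥ A *ᵥ d)*(d ⬝ᵥ d)*t0 - (v ⬝ᵥ d)*(d ⬝ᵥ A *ᵥ d)) * e2
          rw [e3] at hE2
          have hc2 : (0:ℝ) < (v ⬝ᵥ d)^2 := by positivity
          by_contra hneg
          push_neg at hneg
          have h5 : 2*(v ⬝ᵥ d)^2*((d ⬝ᵥ A *ᵥ d) + σ*(d ⬝ᵥ d)) < 0 :=
            mul_neg_of_pos_of_neg (by positivity) hneg
          nlinarith [hE2, h5]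
        intro d
        by_cases hvd : v ⬝ᵥ d = 0
        · apply tm_key (d ⬝ᵥ (A+σ•1) *ᵥ d) (2*(d ⬝ᵥ (A+σ•1) *ᵥ v))
            (v ⬝ᵥ (A+σ•1) *ᵥ v) 1 one_pos
          intro s hs0 hs1
          have hvds : v ⬝ᵥ (d + s•v) ≠ 0 := by
            rw [dotProduct_add, dotProduct_smul, smul_eq_mul, hvd, hb, zero_add]
            exact ne_of_gt (mul_pos hs0 hδ2)
          have h6 := main (d + s•v) hvds
          have h7 := tm_bilin (A+σ•1) hMsymm 1 s d v
          rw [one_smul] at h7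
          rw [h7] at h6
          nlinarith [h6]
        · exact main d hvd
    · -- interior case
      have hlt : v ⬝ᵥ v < δ^2 := lt_of_le_of_ne hv hb
      have hfeas_int : ∀ d : Fin m → ℝ, ∃ ε : ℝ, 0 < ε ∧ ∀ t : ℝ, 0 < t → t < ε →
          (v + t•d) ⬝ᵥ (v + t•d) ≤ δ^2 := by
        intro d
        set K := 2*|v ⬝ᵥ d| + d ⬝ᵥ d + 1 with hK
        have hdd := dot_self_nonneg d
        have hK0 : 0 < K := by positivity
        refine ⟨min ((δ^2 - v ⬝ᵥ v)/K) 1, lt_min (div_pos (by linarith) hK0) one_pos,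
          fun t ht0 htε => ?_⟩
        have ht1 : t ≤ 1 := le_of_lt (lt_of_lt_of_le htε (min_le_right _ _))
        have htK : t*K < δ^2 - v ⬝ᵥ v := by
          have h5 : t < (δ^2 - v ⬝ᵥ v)/K := lt_of_lt_of_le htε (min_le_left _ _)
          calc t*K < ((δ^2 - v ⬝ᵥ v)/K)*K := mul_lt_mul_of_pos_right h5 hK0
          _ = δ^2 - v ⬝ᵥ v := by field_simp
        rw [tm_dot_expand1]
        have habs : v ⬝ᵥ d ≤ |v ⬝ᵥ d| := le_abs_self _
        nlinarith [mul_le_mul_of_nonneg_left habs (by linarith : (0:ℝ) ≤ 2*t),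
          mul_le_mul_of_nonneg_left ht1 (mul_nonneg ht0.le hdd)]
      have hdir : ∀ d : Fin m → ℝ, 0 ≤ grad ⬝ᵥ d := by
        intro d
        obtain ⟨ε, hε, hfeas⟩ := hfeas_int d
        apply tm_key_lin _ ((1/2) * (d ⬝ᵥ A *ᵥ d)) ε hε
        intro t ht0 htε
        have hE := Ediff (t•d) (hfeas t ht0 htε)
        rw [tm_bilin1, dotProduct_smul, smul_eq_mul] at hE
        nlinarith
      have hgrad0 : grad = 0 := by
        rw [← dotProduct_self_eq_zero]
        have h1 := hdir grad
        have h2 := hdir (-grad)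
        rw [dotProduct_neg] at h2
        linarith
      refine ⟨0, le_refl 0, ?_, by ring, ?_⟩
      · rw [statid, hgrad0]; simp
      · intro d
        rw [quadid]
        obtain ⟨ε, hε, hfeas⟩ := hfeas_int d
        have hE := Ediff ((ε/2)•d) (hfeas (ε/2) (by linarith) (by linarith))
        rw [tm_bilin1, hgrad0] at hE
        simp only [zero_dotProduct, zero_add] at hE
        have h9 : 0 ≤ d ⬝ᵥ A *ᵥ d := by
          by_contra hneg
          push_neg at hneg
          have : (ε/2)^2 * (d ⬝ᵥ A *ᵥ d) < 0 :=
            mul_neg_of_pos_of_neg (by positivity) hneg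
          linarith
        simpa using h9
  · -- sufficiency
    rintro ⟨σ, hσ, hstat, hcomp, hpsd⟩ w hw
    have hgradv : a + A *ᵥ v = -(σ • v) := by
      have := statid σ
      rw [hstat] at this
      have h2 : (a + A *ᵥ v) + σ • v = 0 := this.symm
      have := sub_eq_zero.mpr h2.symm
      funext i
      have := congrFun h2 i
      simp only [Pi.add_apply, Pi.neg_apply, Pi.zero_apply] at this ⊢
      linarith
    have hw' : w = v + (w - v) := by abel
    have hE := tm_expand_quad A hA a v (w - v)
    rw [← hw'] at hE
    have hdd : w ⬝ᵥ w = v ⬝ᵥ v + 2*(v ⬝ᵥ (w-v)) + (w-v) ⬝ᵥ (w-v) := by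
      have := tm_dot_expand1 1 v (w - v)
      rw [one_smul] at this
      rw [← hw'] at this
      linarith [this]
    have hpsd' := hpsd (w - v)
    rw [quadid] at hpsd'
    have hgd : (a + A *ᵥ v) ⬝ᵥ (w - v) = -(σ * (v ⬝ᵥ (w-v))) := by
      rw [hgradv, neg_dotProduct, smul_dotProduct, smul_eq_mul]
    have hcomp' : 0 ≤ σ * (v ⬝ᵥ v - w ⬝ᵥ w) := by
      rcases mul_eq_zero.mp hcomp with h | h
      · rw [h]; simp
      · have : v ⬝ᵥ v = δ^2 := by linarith
        rw [this]
        exact mul_nonneg hσ (by linarith)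
    nlinarith [hE, hgd, hpsd', hcomp', hdd]


lemma tm_hermitian_of_symm {m : ℕ} (M : Matrix (Fin m) (Fin m) ℝ) (h : Mᵀ = M) :
    M.IsHermitian := by
  rw [IsHermitian, conjTranspose_eq_transpose_of_trivial]; exact h

lemma tm_comp_bridge {m : ℕ} (x : Fin m → ℝ) (σ δ : ℝ) (hδ : 0 < δ) :
    σ * (norm2 x - δ) = 0 ↔ σ * (x ⬝ᵥ x - δ^2) = 0 := by
  constructor <;> intro h <;> rcases mul_eq_zero.mp h with h' | h'
  · rw [h', zero_mul]
  · have hx : norm2 x = δ := by linarith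
    rw [(norm2_eq_iff x hδ.le).mp hx, sub_self, mul_zero]
  · rw [h', zero_mul]
  · have hx : x ⬝ᵥ x = δ^2 := by linarith
    rw [(norm2_eq_iff x hδ.le).mpr hx, sub_self, mul_zero]

set_option maxHeartbeats 1000000 in
/-- Let `P = [P_par P_perp]` be orthogonal, `B = P diag(Λ, γI) Pᵀ`,
`Q(p) = gᵀp + (1/2) pᵀ B p`, and `δ > 0`.  A vector `p*` with `‖P_parᵀ p*‖₂ ≤ δ` and
`‖P_perpᵀ p*‖₂ ≤ δ` is a global solution of `min Q(p)` s.t. `‖p‖_{P,2} ≤ δ` if and only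
if there exist unique `σ_par ≥ 0` and `σ_perp ≥ 0` such that
`(B + C_par) p* + g = 0`, `σ_par (‖P_parᵀ p*‖₂ - δ) = 0`,
`σ_perp (‖P_perpᵀ p*‖₂ - δ) = 0`, and `B + C_par` is positive semidefinite, where
`C_par = σ_perp I + (σ_par - σ_perp) P_par P_parᵀ`. -/
theorem global_solution_characterization_P2
    (n k : ℕ) (hkn : k + 1 < n)
    (Ppar : Matrix (Fin n) (Fin (k + 1)) ℝ)
    (Pperp : Matrix (Fin n) (Fin (n - (k + 1))) ℝ)
    (hpar : Pparᵀ * Ppar = 1) (hperp : Pperpᵀ * Pperp = 1)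
    (hmix : Pparᵀ * Pperp = 0)
    (hfull : Ppar * Pparᵀ + Pperp * Pperpᵀ = 1)
    (lam : Fin (k + 1) → ℝ) (hmono : Monotone lam) (γ : ℝ)
    (B : Matrix (Fin n) (Fin n) ℝ)
    (hB : B = Ppar * Matrix.diagonal lam * Pparᵀ + γ • (Pperp * Pperpᵀ))
    (g : Fin n → ℝ) (δ : ℝ) (hδ : 0 < δ)
    (Q : (Fin n → ℝ) → ℝ)
    (hQ : ∀ p, Q p = g ⬝ᵥ p + (1 / 2) * (p ⬝ᵥ B.mulVec p))
    (pstar : Fin n → ℝ)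
    (h1 : norm2 (Pparᵀ.mulVec pstar) ≤ δ)
    (h2 : norm2 (Pperpᵀ.mulVec pstar) ≤ δ) :
    (∀ p : Fin n → ℝ,
        max (norm2 (Pparᵀ.mulVec p)) (norm2 (Pperpᵀ.mulVec p)) ≤ δ → Q pstar ≤ Q p)
    ↔ ∃! σ : ℝ × ℝ,
        0 ≤ σ.1 ∧ 0 ≤ σ.2 ∧
        (B + (σ.2 • (1 : Matrix (Fin n) (Fin n) ℝ)
            + (σ.1 - σ.2) • (Ppar * Pparᵀ))).mulVec pstar + g = 0 ∧
        σ.1 * (norm2 (Pparᵀ.mulVec pstar) - δ) = 0 ∧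
        σ.2 * (norm2 (Pperpᵀ.mulVec pstar) - δ) = 0 ∧
        (B + (σ.2 • (1 : Matrix (Fin n) (Fin n) ℝ)
            + (σ.1 - σ.2) • (Ppar * Pparᵀ))).PosSemidef := by
  have hmix' : Pperpᵀ * Ppar = 0 := by
    have h0 := congrArg Matrix.transpose hmix
    rwa [transpose_mul, transpose_transpose, transpose_zero] at h0
  have hΛsymm : (Matrix.diagonal lam)ᵀ = Matrix.diagonal lam :=
    Matrix.diagonal_transpose lam
  have hγsymm : (γ • (1 : Matrix (Fin (n-(k+1))) (Fin (n-(k+1))) ℝ))ᵀ = γ • 1 := by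
    rw [transpose_smul, transpose_one]
  set v1 := Pparᵀ *ᵥ pstar with hv1
  set v2 := Pperpᵀ *ᵥ pstar with hv2
  set g1 := Pparᵀ *ᵥ g with hg1
  set g2 := Pperpᵀ *ᵥ g with hg2
  have hdec : ∀ x : Fin n → ℝ, Ppar *ᵥ (Pparᵀ *ᵥ x) + Pperp *ᵥ (Pperpᵀ *ᵥ x) = x := by
    intro x
    rw [mulVec_mulVec, mulVec_mulVec, ← add_mulVec, hfull, one_mulVec]
  have rec1 : ∀ (w1 : Fin (k+1) → ℝ) (w2 : Fin (n-(k+1)) → ℝ),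
      Pparᵀ *ᵥ (Ppar *ᵥ w1 + Pperp *ᵥ w2) = w1 := by
    intro w1 w2
    rw [mulVec_add, mulVec_mulVec, mulVec_mulVec, hpar, hmix, one_mulVec,
      zero_mulVec, add_zero]
  have rec2 : ∀ (w1 : Fin (k+1) → ℝ) (w2 : Fin (n-(k+1)) → ℝ),
      Pperpᵀ *ᵥ (Ppar *ᵥ w1 + Pperp *ᵥ w2) = w2 := by
    intro w1 w2
    rw [mulVec_add, mulVec_mulVec, mulVec_mulVec, hperp, hmix', one_mulVec,
      zero_mulVec, zero_add]
  have dot1 : ∀ (x : Fin n → ℝ) (y : Fin (k+1) → ℝ),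
      x ⬝ᵥ (Ppar *ᵥ y) = (Pparᵀ *ᵥ x) ⬝ᵥ y := by
    intro x y
    rw [dotProduct_comm, tm_mulVec_dot, dotProduct_comm]
  have dot2 : ∀ (x : Fin n → ℝ) (y : Fin (n-(k+1)) → ℝ),
      x ⬝ᵥ (Pperp *ᵥ y) = (Pperpᵀ *ᵥ x) ⬝ᵥ y := by
    intro x y
    rw [dotProduct_comm, tm_mulVec_dot, dotProduct_comm]
  have hBP1 : B * Ppar = Ppar * Matrix.diagonal lam := by
    rw [hB, Matrix.add_mul, Matrix.smul_mul,
      Matrix.mul_assoc (Ppar * Matrix.diagonal lam) _ _, hpar, Matrix.mul_one,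
      Matrix.mul_assoc, hmix', Matrix.mul_zero, smul_zero, add_zero]
  have hBP2 : B * Pperp = γ • Pperp := by
    rw [hB, Matrix.add_mul, Matrix.smul_mul,
      Matrix.mul_assoc (Ppar * Matrix.diagonal lam) _ _, hmix, Matrix.mul_zero,
      Matrix.mul_assoc, hperp, Matrix.mul_one, zero_add]
  have hQval : ∀ (w1 : Fin (k+1) → ℝ) (w2 : Fin (n-(k+1)) → ℝ),
      Q (Ppar *ᵥ w1 + Pperp *ᵥ w2)
        = (g1 ⬝ᵥ w1 + (1/2) * (w1 ⬝ᵥ (Matrix.diagonal lam) *ᵥ w1))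
          + (g2 ⬝ᵥ w2 + (1/2) * (w2 ⬝ᵥ (γ • (1 : Matrix (Fin (n-(k+1))) (Fin (n-(k+1))) ℝ)) *ᵥ w2)) := by
    intro w1 w2
    rw [hQ]
    have hBp : B *ᵥ (Ppar *ᵥ w1 + Pperp *ᵥ w2)
        = Ppar *ᵥ ((Matrix.diagonal lam) *ᵥ w1)
          + Pperp *ᵥ ((γ • (1 : Matrix (Fin (n-(k+1))) (Fin (n-(k+1))) ℝ)) *ᵥ w2) := by
      rw [mulVec_add, mulVec_mulVec, mulVec_mulVec, hBP1, hBP2, ← mulVec_mulVec,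
        smul_mulVec, smul_mulVec, one_mulVec, ← mulVec_smul]
    simp only [hBp, dotProduct_add, dot1, dot2, rec1, rec2, ← hg1, ← hg2]
    ring
  have hps : Ppar *ᵥ v1 + Pperp *ᵥ v2 = pstar := hdec pstar
  have hn1 : v1 ⬝ᵥ v1 ≤ δ^2 := (norm2_le_iff v1 hδ.le).mp h1
  have hn2 : v2 ⬝ᵥ v2 ≤ δ^2 := (norm2_le_iff v2 hδ.le).mp h2
  have hiff1 : (∀ p : Fin n → ℝ,
        max (norm2 (Pparᵀ.mulVec p)) (norm2 (Pperpᵀ.mulVec p)) ≤ δ → Q pstar ≤ Q p)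
      ↔ ((∀ w : Fin (k+1) → ℝ, w ⬝ᵥ w ≤ δ^2 →
            g1 ⬝ᵥ v1 + (1/2) * (v1 ⬝ᵥ (Matrix.diagonal lam) *ᵥ v1)
              ≤ g1 ⬝ᵥ w + (1/2) * (w ⬝ᵥ (Matrix.diagonal lam) *ᵥ w))
        ∧ (∀ w : Fin (n-(k+1)) → ℝ, w ⬝ᵥ w ≤ δ^2 →
            g2 ⬝ᵥ v2 + (1/2) * (v2 ⬝ᵥ (γ • (1 : Matrix (Fin (n-(k+1))) (Fin (n-(k+1))) ℝ)) *ᵥ v2)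
              ≤ g2 ⬝ᵥ w + (1/2) * (w ⬝ᵥ (γ • (1 : Matrix (Fin (n-(k+1))) (Fin (n-(k+1))) ℝ)) *ᵥ w))) := by
    constructor
    · intro hg
      constructor
      · intro w hw
        have hfeas : max (norm2 (Pparᵀ.mulVec (Ppar *ᵥ w + Pperp *ᵥ v2)))
            (norm2 (Pperpᵀ.mulVec (Ppar *ᵥ w + Pperp *ᵥ v2))) ≤ δ := by
          show max (norm2 (Pparᵀ *ᵥ (Ppar *ᵥ w + Pperp *ᵥ v2)))
            (norm2 (Pperpᵀ *ᵥ (Ppar *ᵥ w + Pperp *ᵥ v2))) ≤ δ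
          rw [rec1, rec2]
          exact max_le ((norm2_le_iff w hδ.le).mpr hw) h2
        have hQle := hg _ hfeas
        rw [hQval w v2, ← hps, hQval v1 v2] at hQle
        linarith
      · intro w hw
        have hfeas : max (norm2 (Pparᵀ.mulVec (Ppar *ᵥ v1 + Pperp *ᵥ w)))
            (norm2 (Pperpᵀ.mulVec (Ppar *ᵥ v1 + Pperp *ᵥ w))) ≤ δ := by
          show max (norm2 (Pparᵀ *ᵥ (Ppar *ᵥ v1 + Pperp *ᵥ w)))
            (norm2 (Pperpᵀ *ᵥ (Ppar *ᵥ v1 + Pperp *ᵥ w))) ≤ δ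
          rw [rec1, rec2]
          exact max_le h1 ((norm2_le_iff w hδ.le).mpr hw)
        have hQle := hg _ hfeas
        rw [hQval v1 w, ← hps, hQval v1 v2] at hQle
        linarith
    · rintro ⟨m1, m2⟩ p hp
      have h1p : norm2 (Pparᵀ *ᵥ p) ≤ δ := le_trans (le_max_left _ _) hp
      have h2p : norm2 (Pperpᵀ *ᵥ p) ≤ δ := le_trans (le_max_right _ _) hp
      have ha := m1 (Pparᵀ *ᵥ p) ((norm2_le_iff _ hδ.le).mp h1p)
      have hbb := m2 (Pperpᵀ *ᵥ p) ((norm2_le_iff _ hδ.le).mp h2p)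
      have hpd := hdec p
      calc Q pstar = _ := by rw [← hps, hQval v1 v2]
      _ ≤ _ := by exact add_le_add ha hbb
      _ = Q p := by rw [← hQval (Pparᵀ *ᵥ p) (Pperpᵀ *ᵥ p), hpd]
  have t1 := tm_trs (Matrix.diagonal lam) hΛsymm g1 δ hδ v1 hn1
  have t2 := tm_trs (γ • (1 : Matrix (Fin (n-(k+1))) (Fin (n-(k+1))) ℝ)) hγsymm g2 δ hδ v2 hn2
  -- matrix projections of the combined matrix
  have ePB1 : Pparᵀ * B = Matrix.diagonal lam * Pparᵀ := by
    rw [hB, Matrix.mul_add, Matrix.mul_smul, ← Matrix.mul_assoc, ← Matrix.mul_assoc,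
      hpar, Matrix.one_mul, ← Matrix.mul_assoc, hmix, Matrix.zero_mul, smul_zero,
      add_zero]
  have ePB2 : Pperpᵀ * B = γ • Pperpᵀ := by
    rw [hB, Matrix.mul_add, Matrix.mul_smul, ← Matrix.mul_assoc, ← Matrix.mul_assoc,
      hmix', Matrix.zero_mul, Matrix.zero_mul, zero_add, ← Matrix.mul_assoc, hperp,
      Matrix.one_mul]
  have hM1 : ∀ σ1 σ2 : ℝ, Pparᵀ * (B + (σ2 • (1 : Matrix (Fin n) (Fin n) ℝ)
        + (σ1 - σ2) • (Ppar * Pparᵀ)))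
      = Matrix.diagonal lam * Pparᵀ + σ1 • Pparᵀ := by
    intro σ1 σ2
    have hss : σ2 + (σ1 - σ2) = σ1 := by ring
    rw [Matrix.mul_add, ePB1, Matrix.mul_add, Matrix.mul_smul, Matrix.mul_one,
      Matrix.mul_smul, ← Matrix.mul_assoc, hpar, Matrix.one_mul, ← add_smul, hss]
  have hM2 : ∀ σ1 σ2 : ℝ, Pperpᵀ * (B + (σ2 • (1 : Matrix (Fin n) (Fin n) ℝ)
        + (σ1 - σ2) • (Ppar * Pparᵀ)))
      = γ • Pperpᵀ + σ2 • Pperpᵀ := by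
    intro σ1 σ2
    rw [Matrix.mul_add, ePB2, Matrix.mul_add, Matrix.mul_smul, Matrix.mul_one,
      Matrix.mul_smul, ← Matrix.mul_assoc, hmix', Matrix.zero_mul, smul_zero,
      add_zero]
  have proj1 : ∀ σ1 σ2 : ℝ,
      Pparᵀ *ᵥ ((B + (σ2 • (1 : Matrix (Fin n) (Fin n) ℝ)
          + (σ1 - σ2) • (Ppar * Pparᵀ))) *ᵥ pstar + g)
      = (Matrix.diagonal lam + σ1 • 1) *ᵥ v1 + g1 := by
    intro σ1 σ2
    rw [mulVec_add, mulVec_mulVec, hM1 σ1 σ2, add_mulVec, smul_mulVec,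
      ← mulVec_mulVec, add_mulVec, smul_mulVec, one_mulVec, ← hv1, ← hg1]
  have proj2 : ∀ σ1 σ2 : ℝ,
      Pperpᵀ *ᵥ ((B + (σ2 • (1 : Matrix (Fin n) (Fin n) ℝ)
          + (σ1 - σ2) • (Ppar * Pparᵀ))) *ᵥ pstar + g)
      = ((γ : ℝ) • (1 : Matrix (Fin (n-(k+1))) (Fin (n-(k+1))) ℝ) + σ2 • 1) *ᵥ v2 + g2 := by
    intro σ1 σ2
    rw [mulVec_add, mulVec_mulVec, hM2 σ1 σ2, add_mulVec, smul_mulVec,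
      smul_mulVec, add_mulVec, smul_mulVec, smul_mulVec,
      one_mulVec, ← hv2, ← hg2]
  have stat_iff : ∀ σ1 σ2 : ℝ,
      ((B + (σ2 • (1 : Matrix (Fin n) (Fin n) ℝ)
          + (σ1 - σ2) • (Ppar * Pparᵀ))) *ᵥ pstar + g = 0)
      ↔ ((Matrix.diagonal lam + σ1 • 1) *ᵥ v1 + g1 = 0
          ∧ ((γ : ℝ) • (1 : Matrix (Fin (n-(k+1))) (Fin (n-(k+1))) ℝ) + σ2 • 1) *ᵥ v2 + g2 = 0) := by
    intro σ1 σ2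
    constructor
    · intro h
      constructor
      · rw [← proj1 σ1 σ2, h, mulVec_zero]
      · rw [← proj2 σ1 σ2, h, mulVec_zero]
    · rintro ⟨ha, hbb⟩
      have hd := hdec ((B + (σ2 • (1 : Matrix (Fin n) (Fin n) ℝ)
          + (σ1 - σ2) • (Ppar * Pparᵀ))) *ᵥ pstar + g)
      rw [← hd, proj1 σ1 σ2, proj2 σ1 σ2, ha, hbb, mulVec_zero, mulVec_zero,
        add_zero]
  -- quadratic form decomposition
  have qf : ∀ (σ1 σ2 : ℝ) (x : Fin n → ℝ),
      x ⬝ᵥ (B + (σ2 • (1 : Matrix (Fin n) (Fin n) ℝ)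
          + (σ1 - σ2) • (Ppar * Pparᵀ))) *ᵥ x
        = (Pparᵀ *ᵥ x) ⬝ᵥ (Matrix.diagonal lam + σ1 • 1) *ᵥ (Pparᵀ *ᵥ x)
          + (Pperpᵀ *ᵥ x) ⬝ᵥ ((γ : ℝ) • (1 : Matrix (Fin (n-(k+1))) (Fin (n-(k+1))) ℝ) + σ2 • 1) *ᵥ (Pperpᵀ *ᵥ x) := by
    intro σ1 σ2 x
    conv_lhs => rw [← hdec ((B + (σ2 • (1 : Matrix (Fin n) (Fin n) ℝ)
          + (σ1 - σ2) • (Ppar * Pparᵀ))) *ᵥ x)]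
    rw [dotProduct_add, dot1, dot2, mulVec_mulVec, mulVec_mulVec, hM1 σ1 σ2,
      hM2 σ1 σ2]
    simp only [add_mulVec, smul_mulVec, one_mulVec, ← mulVec_mulVec]
  have hBsym : Bᵀ = B := by
    rw [hB, transpose_add, transpose_smul, transpose_mul, transpose_mul,
      transpose_transpose, hΛsymm, transpose_mul, transpose_transpose,
      Matrix.mul_assoc]
  have hermit : ∀ σ1 σ2 : ℝ, (B + (σ2 • (1 : Matrix (Fin n) (Fin n) ℝ)
      + (σ1 - σ2) • (Ppar * Pparᵀ))).IsHermitian := by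
    intro σ1 σ2
    apply tm_hermitian_of_symm
    rw [transpose_add, transpose_add, transpose_smul, transpose_one,
      transpose_smul, transpose_mul, transpose_transpose, hBsym]
  have psd_iff : ∀ σ1 σ2 : ℝ,
      (B + (σ2 • (1 : Matrix (Fin n) (Fin n) ℝ)
          + (σ1 - σ2) • (Ppar * Pparᵀ))).PosSemidef
      ↔ ((∀ d : Fin (k+1) → ℝ, 0 ≤ d ⬝ᵥ (Matrix.diagonal lam + σ1 • 1) *ᵥ d)
        ∧ (∀ d : Fin (n-(k+1)) → ℝ,
            0 ≤ d ⬝ᵥ ((γ : ℝ) • (1 : Matrix (Fin (n-(k+1))) (Fin (n-(k+1))) ℝ) + σ2 • 1) *ᵥ d)) := by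
    intro σ1 σ2
    constructor
    · intro hp
      constructor
      · intro d
        have h9 : 0 ≤ (Ppar *ᵥ d) ⬝ᵥ (B + (σ2 • (1 : Matrix (Fin n) (Fin n) ℝ)
            + (σ1 - σ2) • (Ppar * Pparᵀ))) *ᵥ (Ppar *ᵥ d) := by
            have := hp.dotProduct_mulVec_nonneg (Ppar *ᵥ d); rwa [star_trivial] at this
        rw [qf σ1 σ2, mulVec_mulVec d Pparᵀ Ppar, mulVec_mulVec d Pperpᵀ Ppar,
          hpar, hmix', one_mulVec, zero_mulVec, mulVec_zero, dotProduct_zero,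
          add_zero] at h9
        exact h9
      · intro d
        have h9 : 0 ≤ (Pperp *ᵥ d) ⬝ᵥ (B + (σ2 • (1 : Matrix (Fin n) (Fin n) ℝ)
            + (σ1 - σ2) • (Ppar * Pparᵀ))) *ᵥ (Pperp *ᵥ d) := by
            have := hp.dotProduct_mulVec_nonneg (Pperp *ᵥ d); rwa [star_trivial] at this
        rw [qf σ1 σ2, mulVec_mulVec d Pperpᵀ Pperp, mulVec_mulVec d Pparᵀ Pperp,
          hperp, hmix, one_mulVec, zero_mulVec, mulVec_zero, dotProduct_zero,
          zero_add] at h9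
        exact h9
    · rintro ⟨ha, hbb⟩
      refine PosSemidef.of_dotProduct_mulVec_nonneg (hermit σ1 σ2) ?_
      intro x
      rw [star_trivial]
      show 0 ≤ x ⬝ᵥ (B + (σ2 • (1 : Matrix (Fin n) (Fin n) ℝ)
          + (σ1 - σ2) • (Ppar * Pparᵀ))) *ᵥ x
      rw [qf σ1 σ2]
      exact add_nonneg (ha _) (hbb _)
  rw [hiff1, t1, t2]
  constructor
  · rintro ⟨⟨σ1, hσ1, hst1, hcp1, hpsd1⟩, σ2, hσ2, hst2, hcp2, hpsd2⟩
    refine ⟨(σ1, σ2), ⟨hσ1, hσ2, (stat_iff σ1 σ2).mpr ⟨hst1, hst2⟩,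
      (tm_comp_bridge v1 σ1 δ hδ).mpr hcp1, (tm_comp_bridge v2 σ2 δ hδ).mpr hcp2,
      (psd_iff σ1 σ2).mpr ⟨hpsd1, hpsd2⟩⟩, ?_⟩
    rintro ⟨τ1, τ2⟩ ⟨hτ1, hτ2, hstt, hcpt1, hcpt2, hpsdt⟩
    have hsplit := (stat_iff τ1 τ2).mp hstt
    have e1 : τ1 = σ1 := tm_sigma_unique (Matrix.diagonal lam) g1 v1 δ τ1 σ1 hδ
      hsplit.1 hst1 ((tm_comp_bridge v1 τ1 δ hδ).mp hcpt1) hcp1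
    have e2 : τ2 = σ2 := tm_sigma_unique
      ((γ : ℝ) • (1 : Matrix (Fin (n-(k+1))) (Fin (n-(k+1))) ℝ)) g2 v2 δ τ2 σ2 hδ
      hsplit.2 hst2 ((tm_comp_bridge v2 τ2 δ hδ).mp hcpt2) hcp2
    exact Prod.ext e1 e2
  · rintro ⟨⟨σ1, σ2⟩, ⟨hσ1, hσ2, hst, hcp1, hcp2, hpsd⟩, -⟩
    have hsplit := (stat_iff σ1 σ2).mp hst
    have hpsds := (psd_iff σ1 σ2).mp hpsd
    exact ⟨⟨σ1, hσ1, hsplit.1, (tm_comp_bridge v1 σ1 δ hδ).mp hcp1, hpsds.1⟩,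
           ⟨σ2, hσ2, hsplit.2, (tm_comp_bridge v2 σ2 δ hδ).mp hcp2, hpsds.2⟩⟩
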